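/- Let g : ZMod N → ℂ satisfy ⟨g, Π_λ g⟩ ≠ 0 for all λ ∈ (ZMod N)². Then the N² rank-one matrices (g_λ g_λᴴ)_{λ ∈ (ZMod N)²} form a frame for the space of N×N complex matrices with the Hilbert–Schmidt inner product, with frame bounds A = N·min_{λ} |⟨g, Π_λ g⟩|² and B = N·max_{λ} |⟨g, Π_λ g⟩|²; that is, for every N×N complex matrix H, A·‖H‖²_HS ≤ ∑_{λ ∈ (ZMod N)²} |⟨g_λ, H g_λ⟩|² ≤ B·‖H‖²_HS. -/

import Mathlib

open Complex Finset

/-- `gw N m = ω^m` where `ω = exp(2πi/N)` and `m : ZMod N`. -/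
noncomputable def gw (N : ℕ) (m : ZMod N) : ℂ :=
  Complex.exp (2 * Real.pi * Complex.I * (m.val : ℂ) / (N : ℂ))

/-- Translation operator `(T_p x)(n) = x(n-p)`. -/
def Tr (N : ℕ) (p : ZMod N) (x : ZMod N → ℂ) : ZMod N → ℂ :=
  fun n => x (n - p)

/-- Modulation operator `(M_ℓ x)(n) = ω^{ℓ·n} x(n)`. -/
noncomputable def Md (N : ℕ) (l : ZMod N) (x : ZMod N → ℂ) : ZMod N → ℂ :=
  fun n => gw N (l * n) * x n

/-- Time-frequency shift `Π_{(p,ℓ)} = M_ℓ ∘ T_p`. -/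
noncomputable def Pig (N : ℕ) (p l : ZMod N) (x : ZMod N → ℂ) : ZMod N → ℂ :=
  Md N l (Tr N p x)

/-- Inner product, conjugate linear in the first argument. -/
noncomputable def inn (N : ℕ) [NeZero N] (x y : ZMod N → ℂ) : ℂ :=
  ∑ j : ZMod N, (starRingEnd ℂ) (x j) * y j

section Aux

lemma gw_eq_std (N : ℕ) [NeZero N] (m : ZMod N) : gw N m = ZMod.stdAddChar m := by
  rw [ZMod.stdAddChar_apply, ZMod.toCircle_apply, gw]

lemma gw_zero (N : ℕ) [NeZero N] : gw N 0 = 1 := by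
  rw [gw_eq_std]; exact AddChar.map_zero_eq_one _

lemma gw_add (N : ℕ) [NeZero N] (a b : ZMod N) : gw N (a + b) = gw N a * gw N b := by
  simp only [gw_eq_std]; exact AddChar.map_add_eq_mul _ a b

lemma gw_abs (N : ℕ) [NeZero N] (m : ZMod N) : ‖gw N m‖ = 1 := by
  rw [gw_eq_std, ZMod.stdAddChar_apply]; exact Circle.norm_coe _

lemma gw_ne_zero (N : ℕ) [NeZero N] (m : ZMod N) : gw N m ≠ 0 := by
  intro h; have := gw_abs N m; rw [h] at this; simp at this

lemma gw_conj (N : ℕ) [NeZero N] (m : ZMod N) :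
    (starRingEnd ℂ) (gw N m) = gw N (-m) := by
  have h1 : gw N m * gw N (-m) = 1 := by
    rw [← gw_add]; simp [gw_zero]
  have h2 : gw N m * (starRingEnd ℂ) (gw N m) = 1 := by
    rw [Complex.mul_conj, Complex.normSq_eq_norm_sq, gw_abs]; norm_num
  exact mul_left_cancel₀ (gw_ne_zero N m) (h2.trans h1.symm)

lemma gw_orth (N : ℕ) [NeZero N] (t : ZMod N) :
    ∑ i : ZMod N, gw N (t * i) = if t = 0 then (N : ℂ) else 0 := by
  simp only [gw_eq_std]
  split_ifs with h
  · simp only [h, zero_mul, AddChar.map_zero_eq_one, sum_const, card_univ, ZMod.card,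
      nsmul_eq_mul, mul_one]
  · exact AddChar.sum_eq_zero_of_ne_one (ZMod.isPrimitive_stdAddChar N h)

/-- Generic Parseval identity for an orthogonal kernel. -/
lemma parseval_gen {ι : Type*} [Fintype ι] [DecidableEq ι] (K : ι → ι → ℂ) (C : ℂ)
    (hK : ∀ a b : ι, ∑ x : ι, (starRingEnd ℂ) (K x a) * K x b = if a = b then C else 0)
    (d : ι → ℂ) :
    ∑ x : ι, (starRingEnd ℂ) (∑ a : ι, d a * K x a) * (∑ a : ι, d a * K x a) =
      C * ∑ a : ι, (starRingEnd ℂ) (d a) * d a := by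
  have step1 : ∀ x : ι, (starRingEnd ℂ) (∑ a : ι, d a * K x a) * (∑ a : ι, d a * K x a)
      = ∑ a : ι, ∑ b : ι, (starRingEnd ℂ) (d a) * d b * ((starRingEnd ℂ) (K x a) * K x b) := by
    intro x
    rw [map_sum, Finset.sum_mul_sum]
    refine Finset.sum_congr rfl fun a _ => Finset.sum_congr rfl fun b _ => ?_
    rw [map_mul]; ring
  calc ∑ x : ι, (starRingEnd ℂ) (∑ a : ι, d a * K x a) * (∑ a : ι, d a * K x a)
      = ∑ x : ι, ∑ a : ι, ∑ b : ι,
          (starRingEnd ℂ) (d a) * d b * ((starRingEnd ℂ) (K x a) * K x b) := by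
        exact Finset.sum_congr rfl fun x _ => step1 x
    _ = ∑ a : ι, ∑ b : ι, (starRingEnd ℂ) (d a) * d b *
          (∑ x : ι, (starRingEnd ℂ) (K x a) * K x b) := by
        rw [Finset.sum_comm]
        refine Finset.sum_congr rfl fun a _ => ?_
        rw [Finset.sum_comm]
        refine Finset.sum_congr rfl fun b _ => ?_
        rw [Finset.mul_sum]
    _ = ∑ a : ι, ∑ b : ι, (starRingEnd ℂ) (d a) * d b * (if a = b then C else 0) := by
        simp only [hK]
    _ = C * ∑ a : ι, (starRingEnd ℂ) (d a) * d a := by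
        rw [Finset.mul_sum]
        refine Finset.sum_congr rfl fun a _ => ?_
        simp only [mul_ite, mul_zero]
        rw [Finset.sum_ite_eq]
        simp only [mem_univ, if_true]
        ring

/-- Orthogonality of the symplectic-type two-dimensional kernel. -/
lemma orth2 (N : ℕ) [NeZero N] (a b : ZMod N × ZMod N) :
    ∑ x : ZMod N × ZMod N,
      (starRingEnd ℂ) (gw N (a.2 * x.1 - x.2 * a.1)) * gw N (b.2 * x.1 - x.2 * b.1)
      = if a = b then (N : ℂ) ^ 2 else 0 := by
  have key : ∀ x : ZMod N × ZMod N,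
      (starRingEnd ℂ) (gw N (a.2 * x.1 - x.2 * a.1)) * gw N (b.2 * x.1 - x.2 * b.1)
      = gw N ((b.2 - a.2) * x.1) * gw N ((a.1 - b.1) * x.2) := by
    intro x
    rw [gw_conj, ← gw_add, ← gw_add]
    congr 1; ring
  simp only [key]
  rw [Fintype.sum_prod_type]
  have h2 : ∀ p : ZMod N, ∑ l : ZMod N, gw N ((b.2 - a.2) * p) * gw N ((a.1 - b.1) * l)
      = gw N ((b.2 - a.2) * p) * (if a.1 - b.1 = 0 then (N:ℂ) else 0) := by
    intro p; rw [← Finset.mul_sum, gw_orth]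
  simp only [h2]
  rw [← Finset.sum_mul, gw_orth]
  rcases eq_or_ne a b with h | h
  · subst h; simp [sq]
  · rw [if_neg h]
    by_cases h1 : a.1 = b.1
    · have h2' : ¬ (b.2 - a.2 = 0) := fun hc => h (Prod.ext h1 (sub_eq_zero.mp hc).symm)
      rw [if_neg h2', zero_mul]
    · have h2' : ¬ (a.1 - b.1 = 0) := fun hc => h1 (sub_eq_zero.mp hc)
      rw [if_neg h2', mul_zero]

/-- Fourier reconstruction of a matrix from its time-frequency coefficients. -/
lemma rec1 (N : ℕ) [NeZero N] (H : Matrix (ZMod N) (ZMod N) ℂ) (i j : ZMod N) :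
    (N : ℂ) * H i j
      = ∑ m : ZMod N, gw N (m * i) * (∑ n : ZMod N, H n (n - (i - j)) * gw N (-(m * n))) := by
  have h1 : ∀ m n : ZMod N, gw N (m * i) * (H n (n - (i - j)) * gw N (-(m * n)))
      = gw N (m * (i - n)) * H n (n - (i - j)) := by
    intro m n
    rw [show gw N (m*i) * (H n (n - (i-j)) * gw N (-(m*n)))
        = gw N (m*i) * gw N (-(m*n)) * H n (n - (i-j)) from by ring, ← gw_add]
    congr 2
    ring
  symm
  calc ∑ m : ZMod N, gw N (m * i) * (∑ n : ZMod N, H n (n - (i - j)) * gw N (-(m * n)))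
      = ∑ m : ZMod N, ∑ n : ZMod N, gw N (m * (i - n)) * H n (n - (i - j)) := by
        refine Finset.sum_congr rfl fun m _ => ?_
        rw [Finset.mul_sum]
        exact Finset.sum_congr rfl fun n _ => h1 m n
    _ = ∑ n : ZMod N, (∑ m : ZMod N, gw N ((i - n) * m)) * H n (n - (i - j)) := by
        rw [Finset.sum_comm]
        refine Finset.sum_congr rfl fun n _ => ?_
        rw [Finset.sum_mul]
        exact Finset.sum_congr rfl fun m _ => by rw [mul_comm m (i - n)]
    _ = ∑ n : ZMod N, (if i - n = 0 then (N : ℂ) else 0) * H n (n - (i - j)) := by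
        simp only [gw_orth]
    _ = (N : ℂ) * H i j := by
        have hcond : ∀ n : ZMod N, (i - n = 0) = (n = i) := fun n => by
          rw [sub_eq_zero]; exact propext ⟨fun h => h.symm, fun h => h.symm⟩
        simp only [hcond, ite_mul, zero_mul]
        rw [Finset.sum_ite_eq' Finset.univ i (fun n => (N : ℂ) * H n (n - (i - j)))]
        simp [sub_sub_cancel]

/-- Covariance of the short-time coefficients under time-frequency shifts. -/
lemma cov1 (N : ℕ) [NeZero N] (g : ZMod N → ℂ) (p l q m : ZMod N) :
    ∑ i : ZMod N, (starRingEnd ℂ) (Pig N p l g i) * (gw N (m * i) * Pig N p l g (i - q))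
      = gw N (m * p - l * q) *
        ∑ t : ZMod N, (starRingEnd ℂ) (g t) * (gw N (m * t) * g (t - q)) := by
  rw [Finset.mul_sum]
  apply Fintype.sum_equiv (Equiv.subRight p)
  intro i
  simp only [Pig, Md, Tr, Equiv.subRight_apply, map_mul, gw_conj]
  have hphase : gw N (-(l * i)) * gw N (m * i) * gw N (l * (i - q))
      = gw N (m * p - l * q) * gw N (m * (i - p)) := by
    rw [← gw_add, ← gw_add, ← gw_add]
    congr 1; ring
  have hg2 : i - q - p = i - p - q := by ring
  rw [hg2]
  linear_combination ((starRingEnd ℂ) (g (i - p)) * g (i - p - q)) * hphase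

/-- Main expansion: `N·⟨g_λ, H g_λ⟩` as a Fourier series over coefficients. -/
lemma keyA (N : ℕ) [NeZero N] (g : ZMod N → ℂ) (H : Matrix (ZMod N) (ZMod N) ℂ)
    (x : ZMod N × ZMod N) :
    (N : ℂ) * inn N (Pig N x.1 x.2 g) (H.mulVec (Pig N x.1 x.2 g))
      = ∑ a : ZMod N × ZMod N,
        ((∑ n : ZMod N, H n (n - a.1) * gw N (-(a.2 * n))) * inn N g (Pig N a.1 a.2 g))
          * gw N (a.2 * x.1 - x.2 * a.1) := by
  obtain ⟨p, l⟩ := x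
  set gl : ZMod N → ℂ := Pig N p l g with hgl
  calc (N : ℂ) * inn N gl (H.mulVec gl)
      = ∑ i : ZMod N, (starRingEnd ℂ) (gl i) * ∑ j : ZMod N, ((N : ℂ) * H i j) * gl j := by
        rw [inn, Finset.mul_sum]
        refine Finset.sum_congr rfl fun i _ => ?_
        simp only [Matrix.mulVec, dotProduct, Finset.mul_sum]
        exact Finset.sum_congr rfl fun j _ => by ring
    _ = ∑ i : ZMod N, ∑ j : ZMod N, ∑ m : ZMod N,
          (starRingEnd ℂ) (gl i) *
            (gw N (m * i) * ((∑ n : ZMod N, H n (n - (i - j)) * gw N (-(m * n))) * gl j)) := by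
        refine Finset.sum_congr rfl fun i _ => ?_
        rw [Finset.mul_sum]
        refine Finset.sum_congr rfl fun j _ => ?_
        rw [rec1 N H i j, Finset.sum_mul, Finset.mul_sum]
        exact Finset.sum_congr rfl fun m _ => by ring
    _ = ∑ i : ZMod N, ∑ q : ZMod N, ∑ m : ZMod N,
          (starRingEnd ℂ) (gl i) *
            (gw N (m * i) * ((∑ n : ZMod N, H n (n - q) * gw N (-(m * n))) * gl (i - q))) := by
        refine Finset.sum_congr rfl fun i _ => ?_
        refine Fintype.sum_equiv (Equiv.subLeft i) _ _ fun j => ?_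
        simp only [Equiv.subLeft_apply, sub_sub_cancel]
    _ = ∑ q : ZMod N, ∑ m : ZMod N,
          (∑ n : ZMod N, H n (n - q) * gw N (-(m * n))) *
            ∑ i : ZMod N, (starRingEnd ℂ) (gl i) * (gw N (m * i) * gl (i - q)) := by
        rw [Finset.sum_comm]
        refine Finset.sum_congr rfl fun q _ => ?_
        rw [Finset.sum_comm]
        refine Finset.sum_congr rfl fun m _ => ?_
        rw [Finset.mul_sum]
        exact Finset.sum_congr rfl fun i _ => by ring
    _ = ∑ q : ZMod N, ∑ m : ZMod N,
          ((∑ n : ZMod N, H n (n - q) * gw N (-(m * n))) * inn N g (Pig N q m g))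
            * gw N (m * p - l * q) := by
        refine Finset.sum_congr rfl fun q _ => Finset.sum_congr rfl fun m _ => ?_
        rw [hgl, cov1 N g p l q m]
        simp only [inn, Pig, Md, Tr]
        ring
    _ = ∑ a : ZMod N × ZMod N,
          ((∑ n : ZMod N, H n (n - a.1) * gw N (-(a.2 * n))) * inn N g (Pig N a.1 a.2 g))
            * gw N (a.2 * p - l * a.1) := by
        rw [Fintype.sum_prod_type]

/-- Parseval identity for the coefficient map. -/
lemma stepC (N : ℕ) [NeZero N] (H : Matrix (ZMod N) (ZMod N) ℂ) :
    ∑ a : ZMod N × ZMod N,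
      (starRingEnd ℂ) (∑ n : ZMod N, H n (n - a.1) * gw N (-(a.2 * n))) *
        (∑ n : ZMod N, H n (n - a.1) * gw N (-(a.2 * n)))
      = (N : ℂ) * ∑ i : ZMod N, ∑ j : ZMod N, (starRingEnd ℂ) (H i j) * H i j := by
  have hK : ∀ a b : ZMod N,
      ∑ x : ZMod N, (starRingEnd ℂ) (gw N (-(x * a))) * gw N (-(x * b))
        = if a = b then (N : ℂ) else 0 := by
    intro a b
    have h1 : ∀ x : ZMod N, (starRingEnd ℂ) (gw N (-(x * a))) * gw N (-(x * b))
        = gw N ((a - b) * x) := by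
      intro x; rw [gw_conj, ← gw_add]; congr 1; ring
    simp only [h1, gw_orth, sub_eq_zero]
  rw [Fintype.sum_prod_type]
  calc ∑ q : ZMod N, ∑ m : ZMod N,
        (starRingEnd ℂ) (∑ n : ZMod N, H n (n - q) * gw N (-(m * n))) *
          (∑ n : ZMod N, H n (n - q) * gw N (-(m * n)))
      = ∑ q : ZMod N, (N : ℂ) * ∑ n : ZMod N, (starRingEnd ℂ) (H n (n - q)) * H n (n - q) := by
        exact Finset.sum_congr rfl fun q _ =>
          parseval_gen (fun x a => gw N (-(x * a))) (N : ℂ) hK (fun n => H n (n - q))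
    _ = (N : ℂ) * ∑ n : ZMod N, ∑ q : ZMod N, (starRingEnd ℂ) (H n (n - q)) * H n (n - q) := by
        rw [← Finset.mul_sum, Finset.sum_comm]
    _ = (N : ℂ) * ∑ i : ZMod N, ∑ j : ZMod N, (starRingEnd ℂ) (H i j) * H i j := by
        congr 1
        refine Finset.sum_congr rfl fun n _ => ?_
        exact Fintype.sum_equiv (Equiv.subLeft n) _ _ fun q => rfl

end Aux

/-- The rank-one operators `g_λ g_λᴴ` form a frame for the matrix space with
frame bounds `A = N min_λ |⟨g,g_λ⟩|²` and `B = N max_λ |⟨g,g_λ⟩|²`. -/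
theorem Gabor_rank_one_frame (N : ℕ) [NeZero N] (g : ZMod N → ℂ)
    (hg : ∀ p l : ZMod N, inn N g (Pig N p l g) ≠ 0)
    (H : Matrix (ZMod N) (ZMod N) ℂ) :
    (N : ℝ) *
        (Finset.univ.inf' Finset.univ_nonempty
          (fun μ : ZMod N × ZMod N => ‖inn N g (Pig N μ.1 μ.2 g)‖ ^ 2)) *
        (∑ i : ZMod N, ∑ j : ZMod N, ‖H i j‖ ^ 2) ≤
      (∑ μ : ZMod N × ZMod N,
        ‖inn N (Pig N μ.1 μ.2 g) (H.mulVec (Pig N μ.1 μ.2 g))‖ ^ 2) ∧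
    (∑ μ : ZMod N × ZMod N,
        ‖inn N (Pig N μ.1 μ.2 g) (H.mulVec (Pig N μ.1 μ.2 g))‖ ^ 2) ≤
      (N : ℝ) *
        (Finset.univ.sup' Finset.univ_nonempty
          (fun μ : ZMod N × ZMod N => ‖inn N g (Pig N μ.1 μ.2 g)‖ ^ 2)) *
        (∑ i : ZMod N, ∑ j : ZMod N, ‖H i j‖ ^ 2) := by
  classical
  have hNR : (0 : ℝ) < (N : ℝ) := by
    have := NeZero.pos N
    exact_mod_cast this
  -- notation
  set cf : ZMod N × ZMod N → ℂ :=
    fun a => ∑ n : ZMod N, H n (n - a.1) * gw N (-(a.2 * n)) with hcf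
  set Af : ZMod N × ZMod N → ℂ := fun a => inn N g (Pig N a.1 a.2 g) with hAf
  set Ff : ZMod N × ZMod N → ℂ :=
    fun a => inn N (Pig N a.1 a.2 g) (H.mulVec (Pig N a.1 a.2 g)) with hFf
  set d : ZMod N × ZMod N → ℂ := fun a => cf a * Af a with hd
  have habs : ∀ z : ℂ, ((starRingEnd ℂ) z * z).re = ‖z‖ ^ 2 := fun z => by
    rw [← Complex.normSq_eq_conj_mul_self, Complex.ofReal_re, ← Complex.sq_norm]
  -- complex Parseval for the frame coefficients
  have hsum : ∑ x : ZMod N × ZMod N,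
        (starRingEnd ℂ) ((N : ℂ) * Ff x) * ((N : ℂ) * Ff x)
      = (N : ℂ) ^ 2 * ∑ a : ZMod N × ZMod N, (starRingEnd ℂ) (d a) * d a := by
    calc ∑ x : ZMod N × ZMod N, (starRingEnd ℂ) ((N : ℂ) * Ff x) * ((N : ℂ) * Ff x)
        = ∑ x : ZMod N × ZMod N,
            (starRingEnd ℂ) (∑ a : ZMod N × ZMod N, d a * gw N (a.2 * x.1 - x.2 * a.1)) *
              (∑ a : ZMod N × ZMod N, d a * gw N (a.2 * x.1 - x.2 * a.1)) := by
          refine Finset.sum_congr rfl fun x _ => ?_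
          rw [show (N : ℂ) * Ff x
              = ∑ a : ZMod N × ZMod N, d a * gw N (a.2 * x.1 - x.2 * a.1) from keyA N g H x]
      _ = (N : ℂ) ^ 2 * ∑ a : ZMod N × ZMod N, (starRingEnd ℂ) (d a) * d a :=
          parseval_gen _ _ (orth2 N) d
  -- real version of Parseval
  have hS : ∑ μ : ZMod N × ZMod N, ‖Ff μ‖ ^ 2
      = ∑ a : ZMod N × ZMod N, ‖Af a‖ ^ 2 * ‖cf a‖ ^ 2 := by
    have h1 := congrArg Complex.re hsum
    rw [Complex.re_sum] at h1
    have h2 : ∀ x : ZMod N × ZMod N,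
        ((starRingEnd ℂ) ((N : ℂ) * Ff x) * ((N : ℂ) * Ff x)).re
        = (N : ℝ) ^ 2 * ‖Ff x‖ ^ 2 := fun x => by
      rw [habs, norm_mul, Complex.norm_natCast, mul_pow]
    simp only [h2] at h1
    have h3 : ((N : ℂ) ^ 2 * ∑ a : ZMod N × ZMod N, (starRingEnd ℂ) (d a) * d a).re
        = (N : ℝ) ^ 2 * ∑ a : ZMod N × ZMod N, ‖d a‖ ^ 2 := by
      rw [show ((N : ℂ) ^ 2) = (((N : ℝ) ^ 2 : ℝ) : ℂ) by push_cast; ring,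
        Complex.re_ofReal_mul, Complex.re_sum]
      congr 1
      exact Finset.sum_congr rfl fun a _ => habs _
    rw [h3, ← Finset.mul_sum] at h1
    have h4 := mul_left_cancel₀ (pow_ne_zero 2 hNR.ne') h1
    rw [h4]
    refine Finset.sum_congr rfl fun a _ => ?_
    rw [hd]
    simp only [norm_mul, mul_pow]
    ring
  -- real version of stepC
  have hT : ∑ a : ZMod N × ZMod N, ‖cf a‖ ^ 2
      = (N : ℝ) * ∑ i : ZMod N, ∑ j : ZMod N, ‖H i j‖ ^ 2 := by
    have h1 := congrArg Complex.re (stepC N H)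
    rw [Complex.re_sum] at h1
    simp only [habs] at h1
    rw [show ((N : ℂ)) = (((N : ℝ) : ℝ) : ℂ) by push_cast; ring,
      Complex.re_ofReal_mul, Complex.re_sum] at h1
    rw [h1]
    congr 1
    refine Finset.sum_congr rfl fun i _ => ?_
    rw [Complex.re_sum]
    exact Finset.sum_congr rfl fun j _ => habs _
  constructor
  · -- lower bound
    calc (N : ℝ) *
          (Finset.univ.inf' Finset.univ_nonempty
            (fun μ : ZMod N × ZMod N => ‖inn N g (Pig N μ.1 μ.2 g)‖ ^ 2)) *
          (∑ i : ZMod N, ∑ j : ZMod N, ‖H i j‖ ^ 2)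
        = (Finset.univ.inf' Finset.univ_nonempty
            (fun μ : ZMod N × ZMod N => ‖Af μ‖ ^ 2)) *
            ∑ a : ZMod N × ZMod N, ‖cf a‖ ^ 2 := by
          rw [hT]; ring
      _ ≤ ∑ a : ZMod N × ZMod N, ‖Af a‖ ^ 2 * ‖cf a‖ ^ 2 := by
          rw [Finset.mul_sum]
          refine Finset.sum_le_sum fun a _ => ?_
          exact mul_le_mul_of_nonneg_right
            (Finset.inf'_le _ (Finset.mem_univ a)) (by positivity)
      _ = ∑ μ : ZMod N × ZMod N,
            ‖inn N (Pig N μ.1 μ.2 g) (H.mulVec (Pig N μ.1 μ.2 g))‖ ^ 2 := hS.symm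
  · -- upper bound
    calc ∑ μ : ZMod N × ZMod N,
          ‖inn N (Pig N μ.1 μ.2 g) (H.mulVec (Pig N μ.1 μ.2 g))‖ ^ 2
        = ∑ a : ZMod N × ZMod N, ‖Af a‖ ^ 2 * ‖cf a‖ ^ 2 := hS
      _ ≤ (Finset.univ.sup' Finset.univ_nonempty
            (fun μ : ZMod N × ZMod N => ‖Af μ‖ ^ 2)) *
            ∑ a : ZMod N × ZMod N, ‖cf a‖ ^ 2 := by
          rw [Finset.mul_sum]
          refine Finset.sum_le_sum fun a _ => ?_
          exact mul_le_mul_of_nonneg_right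
            (Finset.le_sup' (fun μ : ZMod N × ZMod N => ‖Af μ‖ ^ 2)
              (Finset.mem_univ a)) (by positivity)
      _ = (N : ℝ) *
          (Finset.univ.sup' Finset.univ_nonempty
            (fun μ : ZMod N × ZMod N => ‖inn N g (Pig N μ.1 μ.2 g)‖ ^ 2)) *
          (∑ i : ZMod N, ∑ j : ZMod N, ‖H i j‖ ^ 2) := by
          rw [hT]; ring
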